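/- Continuity bound for conditional Shannon entropy with a binary target (the classical Alicki–Fannes–Winter inequality as applied in the paper): let A be a finite type with exactly two elements and B a finite type. Let ρ and σ be probability mass functions on A × B, and set δ = (1/2)·∑_{(a,b)} |ρ(a,b) − σ(a,b)| (their total variation distance). Then |H_ρ(A | B) − H_σ(A | B)| ≤ δ·log 2 + (1+δ)·h_b(δ/(1+δ)). -/

import Mathlib

open Finset

/-- Shannon entropy (in nats) of a probability mass function on a finite type,
with the convention `0 · log 0 = 0` (which holds since `Real.log 0 = 0`). -/
noncomputable def entropy {S : Type*} [Fintype S] (p : S → ℝ) : ℝ :=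
  ∑ x, -(p x * Real.log (p x))

/-- Conditional Shannon entropy `H_p(A | B)` of a pmf `p` on a product
`A × B`: `∑_b p_B(b) · H(p_{A|B=b})`, where terms with `p_B(b) = 0`
contribute `0` (the factor `p_B(b)` vanishes). -/
noncomputable def condEntropy {A B : Type*} [Fintype A] [Fintype B]
    (p : A × B → ℝ) : ℝ :=
  ∑ b, (∑ a, p (a, b)) * entropy (fun a => p (a, b) / ∑ a', p (a', b))

/-- Conditional mutual information `I_p(A; B | C)` of a pmf `p` on
`A × B × C`, defined as `H_p(A | C) − H_p(A | B × C)`. -/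
noncomputable def cmi {A B C : Type*} [Fintype A] [Fintype B] [Fintype C]
    (p : A × B × C → ℝ) : ℝ :=
  condEntropy (fun ac : A × C => ∑ b, p (ac.1, b, ac.2)) -
    condEntropy (fun abc : A × (B × C) => p (abc.1, abc.2.1, abc.2.2))

/-- Kullback–Leibler divergence (in nats) between two pmfs on a finite type,
with the convention that terms with `p x = 0` contribute `0`. -/
noncomputable def klDiv {S : Type*} [Fintype S] (p q : S → ℝ) : ℝ :=
  ∑ x, p x * Real.log (p x / q x)

/-- Total variation distance between two pmfs on a finite type. -/
noncomputable def tvDist {S : Type*} [Fintype S] (p q : S → ℝ) : ℝ :=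
  (1 / 2) * ∑ x, |p x - q x|

/-- Binary entropy function (in nats), `h_b(x) = −x log x − (1−x) log(1−x)`,
with `h_b(0) = h_b(1) = 0` (automatic since `Real.log 0 = 0`). -/
noncomputable def binEntropy (x : ℝ) : ℝ :=
  -(x * Real.log x) - (1 - x) * Real.log (1 - x)


-- log-sum inequality for two terms
private lemma logsum2 (a₁ a₂ b₁ b₂ : ℝ) (ha₁ : 0 ≤ a₁) (ha₂ : 0 ≤ a₂)
    (hb₁ : 0 ≤ b₁) (hb₂ : 0 ≤ b₂) (h₁ : b₁ = 0 → a₁ = 0) (h₂ : b₂ = 0 → a₂ = 0) :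
    (a₁ + a₂) * Real.log ((a₁ + a₂) / (b₁ + b₂)) ≤
      a₁ * Real.log (a₁ / b₁) + a₂ * Real.log (a₂ / b₂) := by
  rcases eq_or_lt_of_le hb₁ with h | hb₁pos
  · rw [h₁ h.symm, ← h, zero_add]; simp
  rcases eq_or_lt_of_le hb₂ with h | hb₂pos
  · rw [h₂ h.symm, ← h, add_zero]; simp
  have hspos : (0:ℝ) < b₁ + b₂ := by linarith
  have key := Real.convexOn_mul_log.2 (Set.mem_Ici.mpr (by positivity : (0:ℝ) ≤ a₁ / b₁))
    (Set.mem_Ici.mpr (by positivity : (0:ℝ) ≤ a₂ / b₂))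
    (by positivity : (0:ℝ) ≤ b₁ / (b₁ + b₂)) (by positivity : (0:ℝ) ≤ b₂ / (b₁ + b₂))
    (by field_simp)
  simp only [smul_eq_mul] at key
  have e1 : b₁ / (b₁ + b₂) * (a₁ / b₁) + b₂ / (b₁ + b₂) * (a₂ / b₂) = (a₁ + a₂) / (b₁ + b₂) := by
    field_simp
  rw [e1] at key
  have key' := mul_le_mul_of_nonneg_left key hspos.le
  have eL : (b₁ + b₂) * ((a₁ + a₂) / (b₁ + b₂) * Real.log ((a₁ + a₂) / (b₁ + b₂)))
      = (a₁ + a₂) * Real.log ((a₁ + a₂) / (b₁ + b₂)) := by field_simp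
  have eR : (b₁ + b₂) * (b₁ / (b₁ + b₂) * (a₁ / b₁ * Real.log (a₁ / b₁))
        + b₂ / (b₁ + b₂) * (a₂ / b₂ * Real.log (a₂ / b₂)))
      = a₁ * Real.log (a₁ / b₁) + a₂ * Real.log (a₂ / b₂) := by field_simp
  rw [eL, eR] at key'
  exact key'

private noncomputable def colEnt {A : Type*} [Fintype A] (x : A → ℝ) : ℝ :=
  (∑ a, Real.negMulLog (x a)) - Real.negMulLog (∑ a, x a)

private lemma condEntropy_eq_sum_colEnt {A B : Type*} [Fintype A] [Fintype B]
    (p : A × B → ℝ) (hp : ∀ x, 0 ≤ p x) :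
    condEntropy p = ∑ b, colEnt (fun a => p (a, b)) := by
  unfold condEntropy colEnt entropy
  refine Finset.sum_congr rfl fun b _ => ?_
  have hP0 : 0 ≤ ∑ a, p (a, b) := Finset.sum_nonneg fun a _ => hp (a, b)
  rcases eq_or_lt_of_le hP0 with h | hPpos
  · have hz : ∀ a, p (a, b) = 0 := fun a =>
      (Finset.sum_eq_zero_iff_of_nonneg (fun i _ => hp (i, b))).mp h.symm a (Finset.mem_univ a)
    simp [hz]
  · set P := ∑ a, p (a, b) with hPdef
    have e : ∀ a, P * -(p (a, b) / P * Real.log (p (a, b) / P))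
        = Real.negMulLog (p (a, b)) + p (a, b) * Real.log P := by
      intro a
      rcases eq_or_lt_of_le (hp (a, b)) with h | h
      · rw [← h]; simp
      · rw [Real.log_div (ne_of_gt h) (ne_of_gt hPpos), Real.negMulLog]
        field_simp
        ring
    rw [Finset.mul_sum, Finset.sum_congr rfl fun a _ => e a, Finset.sum_add_distrib,
      ← Finset.sum_mul, ← hPdef, Real.negMulLog]
    ring

private lemma colEnt_eq {A : Type*} [Fintype A] (x : A → ℝ) (hx : ∀ a, 0 ≤ x a) :
    colEnt x = -∑ a, x a * Real.log (x a / ∑ a', x a') := by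
  have hX0 : 0 ≤ ∑ a', x a' := Finset.sum_nonneg fun a _ => hx a
  rcases eq_or_lt_of_le hX0 with h | h
  · have hz : ∀ a, x a = 0 := fun a =>
      (Finset.sum_eq_zero_iff_of_nonneg (fun i _ => hx i)).mp h.symm a (Finset.mem_univ a)
    simp [colEnt, hz]
  · set X := ∑ a', x a' with hXdef
    have e : ∀ a, x a * Real.log (x a / X) = -(Real.negMulLog (x a) + x a * Real.log X) := by
      intro a
      rcases eq_or_lt_of_le (hx a) with h' | h'
      · rw [← h']; simp
      · rw [Real.log_div (ne_of_gt h') (ne_of_gt h), Real.negMulLog]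
        ring
    rw [Finset.sum_congr rfl fun a _ => e a, Finset.sum_neg_distrib, neg_neg,
      Finset.sum_add_distrib, ← Finset.sum_mul, colEnt, ← hXdef, Real.negMulLog]
    ring

private lemma scale_log (c u U : ℝ) (hc : 0 ≤ c) :
    c * u * Real.log (c * u / (c * U)) = c * (u * Real.log (u / U)) := by
  rcases eq_or_lt_of_le hc with h | h
  · rw [← h]; simp
  · rw [mul_div_mul_left u U (ne_of_gt h)]; ring

private lemma colEnt_concave {A : Type*} [Fintype A] (x y : A → ℝ)
    (hx : ∀ a, 0 ≤ x a) (hy : ∀ a, 0 ≤ y a) (t : ℝ) (ht0 : 0 ≤ t) (ht1 : t ≤ 1) :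
    (1 - t) * colEnt x + t * colEnt y ≤ colEnt (fun a => (1 - t) * x a + t * y a) := by
  have h1t : 0 ≤ 1 - t := by linarith
  have hz : ∀ a, 0 ≤ (1 - t) * x a + t * y a := fun a => by
    exact add_nonneg (mul_nonneg (by linarith) (hx a)) (mul_nonneg ht0 (hy a))
  rw [colEnt_eq x hx, colEnt_eq y hy, colEnt_eq _ hz]
  have hsum : ∑ a', ((1 - t) * x a' + t * y a') = (1 - t) * ∑ a', x a' + t * ∑ a', y a' := by
    rw [Finset.sum_add_distrib, Finset.mul_sum, Finset.mul_sum]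
  simp only [hsum]
  rw [mul_neg, mul_neg, ← neg_add]
  apply neg_le_neg
  have term : ∀ a : A, ((1 - t) * x a + t * y a) *
        Real.log (((1 - t) * x a + t * y a) / ((1 - t) * ∑ a' : A, x a' + t * ∑ a' : A, y a')) ≤
      (1 - t) * (x a * Real.log (x a / ∑ a' : A, x a')) +
        t * (y a * Real.log (y a / ∑ a' : A, y a')) := by
    intro a
    have hXz : (1 - t) * ∑ a', x a' = 0 → (1 - t) * x a = 0 := by
      intro h
      rcases mul_eq_zero.mp h with h | h
      · rw [h, zero_mul]
      · have : x a = 0 :=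
          (Finset.sum_eq_zero_iff_of_nonneg (fun i _ => hx i)).mp h a (Finset.mem_univ a)
        rw [this, mul_zero]
    have hYz : t * ∑ a', y a' = 0 → t * y a = 0 := by
      intro h
      rcases mul_eq_zero.mp h with h | h
      · rw [h, zero_mul]
      · have : y a = 0 :=
          (Finset.sum_eq_zero_iff_of_nonneg (fun i _ => hy i)).mp h a (Finset.mem_univ a)
        rw [this, mul_zero]
    have key := logsum2 ((1 - t) * x a) (t * y a) ((1 - t) * ∑ a', x a') (t * ∑ a', y a')
      (mul_nonneg h1t (hx a)) (mul_nonneg ht0 (hy a))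
      (mul_nonneg h1t (Finset.sum_nonneg fun i _ => hx i))
      (mul_nonneg ht0 (Finset.sum_nonneg fun i _ => hy i))
      hXz hYz
    rw [scale_log _ _ _ h1t, scale_log _ _ _ ht0] at key
    exact key
  refine le_trans (Finset.sum_le_sum fun a _ => term a) (le_of_eq ?_)
  rw [Finset.sum_add_distrib, ← Finset.mul_sum, ← Finset.mul_sum]

private lemma condEntropy_concave {A B : Type*} [Fintype A] [Fintype B] (p q : A × B → ℝ)
    (hp : ∀ x, 0 ≤ p x) (hq : ∀ x, 0 ≤ q x) (t : ℝ) (ht0 : 0 ≤ t) (ht1 : t ≤ 1) :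
    (1 - t) * condEntropy p + t * condEntropy q ≤
      condEntropy (fun x => (1 - t) * p x + t * q x) := by
  rw [condEntropy_eq_sum_colEnt p hp, condEntropy_eq_sum_colEnt q hq,
    condEntropy_eq_sum_colEnt _
      (fun x => add_nonneg (mul_nonneg (by linarith) (hp x)) (mul_nonneg ht0 (hq x))),
    Finset.mul_sum, Finset.mul_sum, ← Finset.sum_add_distrib]
  exact Finset.sum_le_sum fun b _ =>
    colEnt_concave _ _ (fun a => hp _) (fun a => hq _) t ht0 ht1

private lemma negMulLog_add_le (u v : ℝ) (hu : 0 ≤ u) (hv : 0 ≤ v) :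
    Real.negMulLog (u + v) ≤ Real.negMulLog u + Real.negMulLog v := by
  rcases eq_or_lt_of_le hu with h | h
  · rw [← h]; simp
  rcases eq_or_lt_of_le hv with h' | h'
  · rw [← h']; simp
  have l1 : Real.log u ≤ Real.log (u + v) := Real.log_le_log h (by linarith)
  have l2 : Real.log v ≤ Real.log (u + v) := Real.log_le_log h' (by linarith)
  simp only [Real.negMulLog, neg_mul]
  nlinarith [mul_le_mul_of_nonneg_left l1 hu, mul_le_mul_of_nonneg_left l2 hv]

private lemma binEntropy_eq (t : ℝ) :
    _root_.binEntropy t = Real.negMulLog t + Real.negMulLog (1 - t) := by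
  simp only [_root_.binEntropy, Real.negMulLog]; ring

-- chain rule form: condEntropy p = H(AB) - H(B)
private lemma condEntropy_eq_sub {A B : Type*} [Fintype A] [Fintype B]
    (p : A × B → ℝ) (hp : ∀ x, 0 ≤ p x) :
    condEntropy p = (∑ x, Real.negMulLog (p x)) - ∑ b, Real.negMulLog (∑ a, p (a, b)) := by
  rw [condEntropy_eq_sum_colEnt p hp]
  unfold colEnt
  rw [Finset.sum_sub_distrib, Fintype.sum_prod_type_right]

private lemma condEntropy_mix_le {A B : Type*} [Fintype A] [Fintype B] (p q : A × B → ℝ)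
    (hp : ∀ x, 0 ≤ p x) (hpsum : ∑ x, p x = 1)
    (hq : ∀ x, 0 ≤ q x) (hqsum : ∑ x, q x = 1)
    (t : ℝ) (ht0 : 0 ≤ t) (ht1 : t ≤ 1) :
    condEntropy (fun x => (1 - t) * p x + t * q x) ≤
      (1 - t) * condEntropy p + t * condEntropy q + _root_.binEntropy t := by
  have h1t : 0 ≤ 1 - t := by linarith
  have hz : ∀ x, 0 ≤ (1 - t) * p x + t * q x := fun x =>
    add_nonneg (mul_nonneg h1t (hp x)) (mul_nonneg ht0 (hq x))
  rw [condEntropy_eq_sub p hp, condEntropy_eq_sub q hq, condEntropy_eq_sub _ hz]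
  -- Part 1 : joint entropy subadditive bound
  have part1 : ∑ x : A × B, Real.negMulLog ((1 - t) * p x + t * q x) ≤
      (1 - t) * (∑ x, Real.negMulLog (p x)) + t * (∑ x, Real.negMulLog (q x)) + _root_.binEntropy t := by
    have term : ∀ x : A × B, Real.negMulLog ((1 - t) * p x + t * q x) ≤
        (1 - t) * Real.negMulLog (p x) + t * Real.negMulLog (q x) +
          (p x * Real.negMulLog (1 - t) + q x * Real.negMulLog t) := by
      intro x
      calc Real.negMulLog ((1 - t) * p x + t * q x)
          ≤ Real.negMulLog ((1 - t) * p x) + Real.negMulLog (t * q x) :=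
            negMulLog_add_le _ _ (mul_nonneg h1t (hp x)) (mul_nonneg ht0 (hq x))
        _ = _ := by rw [Real.negMulLog_mul, Real.negMulLog_mul]; ring
    calc ∑ x : A × B, Real.negMulLog ((1 - t) * p x + t * q x)
        ≤ ∑ x : A × B, ((1 - t) * Real.negMulLog (p x) + t * Real.negMulLog (q x) +
            (p x * Real.negMulLog (1 - t) + q x * Real.negMulLog t)) :=
          Finset.sum_le_sum fun x _ => term x
      _ = (1 - t) * (∑ x, Real.negMulLog (p x)) + t * (∑ x, Real.negMulLog (q x)) +
            ((∑ x, p x) * Real.negMulLog (1 - t) + (∑ x, q x) * Real.negMulLog t) := by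
          rw [Finset.sum_add_distrib, Finset.sum_add_distrib, Finset.sum_add_distrib,
            ← Finset.mul_sum, ← Finset.mul_sum, ← Finset.sum_mul, ← Finset.sum_mul]
      _ = _ := by rw [hpsum, hqsum, binEntropy_eq]; ring
  -- Part 2 : marginal entropy concavity bound
  have part2 : (1 - t) * (∑ b, Real.negMulLog (∑ a, p (a, b))) +
      t * (∑ b, Real.negMulLog (∑ a, q (a, b))) ≤
      ∑ b, Real.negMulLog (∑ a, ((1 - t) * p (a, b) + t * q (a, b))) := by
    have term : ∀ b : B, (1 - t) * Real.negMulLog (∑ a, p (a, b)) +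
        t * Real.negMulLog (∑ a, q (a, b)) ≤
        Real.negMulLog (∑ a, ((1 - t) * p (a, b) + t * q (a, b))) := by
      intro b
      have hsum : ∑ a, ((1 - t) * p (a, b) + t * q (a, b)) =
          (1 - t) * (∑ a, p (a, b)) + t * (∑ a, q (a, b)) := by
        rw [Finset.sum_add_distrib, Finset.mul_sum, Finset.mul_sum]
      rw [hsum]
      have hcc : (1 - t) • Real.negMulLog (∑ a, p (a, b)) + t • Real.negMulLog (∑ a, q (a, b)) ≤
          Real.negMulLog ((1 - t) • (∑ a, p (a, b)) + t • (∑ a, q (a, b))) :=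
        Real.concaveOn_negMulLog.2 (Set.mem_Ici.mpr (Finset.sum_nonneg fun a _ => hp (a, b)))
          (Set.mem_Ici.mpr (Finset.sum_nonneg fun a _ => hq (a, b))) h1t ht0 (by ring)
      simpa using hcc
    calc (1 - t) * (∑ b, Real.negMulLog (∑ a, p (a, b))) +
          t * (∑ b, Real.negMulLog (∑ a, q (a, b)))
        = ∑ b, ((1 - t) * Real.negMulLog (∑ a, p (a, b)) +
            t * Real.negMulLog (∑ a, q (a, b))) := by
          rw [Finset.sum_add_distrib, ← Finset.mul_sum, ← Finset.mul_sum]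
      _ ≤ _ := Finset.sum_le_sum fun b _ => term b
  linarith

private lemma condEntropy_nonneg {A B : Type*} [Fintype A] [Fintype B]
    (p : A × B → ℝ) (hp : ∀ x, 0 ≤ p x) : 0 ≤ condEntropy p := by
  unfold condEntropy entropy
  refine Finset.sum_nonneg fun b _ => ?_
  have hP0 : 0 ≤ ∑ a, p (a, b) := Finset.sum_nonneg fun a _ => hp (a, b)
  refine mul_nonneg hP0 (Finset.sum_nonneg fun a _ => ?_)
  rcases eq_or_lt_of_le hP0 with h | h
  · rw [← h]; simp
  · have h1 : 0 ≤ p (a, b) / ∑ a', p (a', b) := div_nonneg (hp (a, b)) hP0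
    have h2 : p (a, b) / ∑ a', p (a', b) ≤ 1 := by
      rw [div_le_one h]
      exact Finset.single_le_sum (fun i (_ : i ∈ Finset.univ) => hp (i, b)) (Finset.mem_univ a)
    have := Real.negMulLog_nonneg h1 h2
    rw [Real.negMulLog_eq_neg] at this
    exact this

private lemma sum_negMulLog_le_log_two {A : Type*} [Fintype A] (hA : Fintype.card A = 2)
    (q : A → ℝ) (hqsum : ∑ a, q a = 1) :
    ∑ a, Real.negMulLog (q a) ≤ Real.log 2 := by
  obtain ⟨e⟩ : Nonempty (A ≃ Fin 2) := ⟨Fintype.equivFinOfCardEq hA⟩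
  rw [← Equiv.sum_comp e.symm (fun a => Real.negMulLog (q a)), Fin.sum_univ_two]
  rw [← Equiv.sum_comp e.symm q, Fin.sum_univ_two] at hqsum
  have h1 : q (e.symm 1) = 1 - q (e.symm 0) := by linarith
  rw [h1]
  have := Real.binEntropy_le_log_two (p := q (e.symm 0))
  rw [Real.binEntropy_eq_negMulLog_add_negMulLog_one_sub] at this
  exact this

private lemma condEntropy_le_log_two {A B : Type*} [Fintype A] [Fintype B]
    (hA : Fintype.card A = 2) (p : A × B → ℝ)
    (hp : ∀ x, 0 ≤ p x) (hpsum : ∑ x, p x = 1) :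
    condEntropy p ≤ Real.log 2 := by
  unfold condEntropy
  have hPsum : ∑ b, ∑ a, p (a, b) = 1 := by
    rw [← Fintype.sum_prod_type_right]; exact hpsum
  calc ∑ b, (∑ a, p (a, b)) * entropy (fun a => p (a, b) / ∑ a', p (a', b))
      ≤ ∑ b, (∑ a, p (a, b)) * Real.log 2 := by
        refine Finset.sum_le_sum fun b _ => ?_
        have hP0 : 0 ≤ ∑ a, p (a, b) := Finset.sum_nonneg fun a _ => hp (a, b)
        rcases eq_or_lt_of_le hP0 with h | h
        · rw [← h]; simp
        · refine mul_le_mul_of_nonneg_left ?_ hP0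
          have : entropy (fun a => p (a, b) / ∑ a', p (a', b)) =
              ∑ a, Real.negMulLog (p (a, b) / ∑ a', p (a', b)) := by
            unfold entropy
            exact Finset.sum_congr rfl fun a _ => (Real.negMulLog_eq_neg ▸ rfl)
          rw [this]
          refine sum_negMulLog_le_log_two hA _ ?_
          rw [← Finset.sum_div, div_self (ne_of_gt h)]
      _ = Real.log 2 := by rw [← Finset.sum_mul, hPsum, one_mul]

private lemma afw_main {A B : Type*} [Fintype A] [Fintype B] (hA : Fintype.card A = 2)
    (ρ σ Δ₁ Δ₂ : A × B → ℝ) (δ : ℝ) (hδ : 0 < δ)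
    (hρ : ∀ x, 0 ≤ ρ x)
    (hσ : ∀ x, 0 ≤ σ x) (hσsum : ∑ x, σ x = 1)
    (hΔ₁ : ∀ x, 0 ≤ Δ₁ x) (hΔ₁sum : ∑ x, Δ₁ x = 1)
    (hΔ₂ : ∀ x, 0 ≤ Δ₂ x)
    (hmix : ∀ x, (1 - δ / (1 + δ)) * ρ x + (δ / (1 + δ)) * Δ₂ x =
      (1 - δ / (1 + δ)) * σ x + (δ / (1 + δ)) * Δ₁ x) :
    condEntropy ρ - condEntropy σ ≤
      δ * Real.log 2 + (1 + δ) * _root_.binEntropy (δ / (1 + δ)) := by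
  have h1δ : (0:ℝ) < 1 + δ := by linarith
  set t := δ / (1 + δ) with htdef
  have ht0 : 0 ≤ t := by positivity
  have ht1 : t ≤ 1 := by rw [htdef, div_le_one h1δ]; linarith
  have hcav := condEntropy_concave ρ Δ₂ hρ hΔ₂ t ht0 ht1
  have hvex := condEntropy_mix_le σ Δ₁ hσ hσsum hΔ₁ hΔ₁sum t ht0 ht1
  have heq : (fun x => (1 - t) * ρ x + t * Δ₂ x) = (fun x => (1 - t) * σ x + t * Δ₁ x) :=
    funext fun x => hmix x
  rw [heq] at hcav
  have hb1 := condEntropy_le_log_two hA Δ₁ hΔ₁ hΔ₁sum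
  have hb2 := condEntropy_nonneg Δ₂ hΔ₂
  -- (1 - t) * (Hρ - Hσ) ≤ t * log 2 + binEntropy t
  have hlin : (1 - t) * (condEntropy ρ - condEntropy σ) ≤
      t * Real.log 2 + _root_.binEntropy t := by nlinarith
  have e1 : (1 - t) * (1 + δ) = 1 := by rw [htdef]; field_simp; ring
  have e2 : t * (1 + δ) = δ := by rw [htdef]; field_simp
  have key : condEntropy ρ - condEntropy σ ≤ (t * Real.log 2 + _root_.binEntropy t) * (1 + δ) := by
    calc condEntropy ρ - condEntropy σ
        = ((1 - t) * (condEntropy ρ - condEntropy σ)) * (1 + δ) := by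
          rw [mul_comm (1 - t) _, mul_assoc, e1, mul_one]
      _ ≤ _ := mul_le_mul_of_nonneg_right hlin h1δ.le
  have expand : (t * Real.log 2 + _root_.binEntropy t) * (1 + δ) =
      t * (1 + δ) * Real.log 2 + (1 + δ) * _root_.binEntropy t := by ring
  rw [e2] at expand
  linarith

/-- **Alicki–Fannes–Winter continuity bound for conditional entropy with a
binary target.**  Let `A` be binary, `ρ, σ` pmfs on `A × B`, and
`δ = δ(ρ, σ)` their total variation distance.  Then
`|H_ρ(A | B) − H_σ(A | B)| ≤ δ · log 2 + (1+δ) · h_b(δ/(1+δ))`. -/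
theorem afw_condEntropy_continuity
    {A B : Type*} [Fintype A] [Fintype B] (hA : Fintype.card A = 2)
    (ρ σ : A × B → ℝ)
    (hρ : ∀ x, 0 ≤ ρ x) (hρsum : ∑ x, ρ x = 1)
    (hσ : ∀ x, 0 ≤ σ x) (hσsum : ∑ x, σ x = 1) :
    |condEntropy ρ - condEntropy σ| ≤
      tvDist ρ σ * Real.log 2 +
        (1 + tvDist ρ σ) * binEntropy (tvDist ρ σ / (1 + tvDist ρ σ)) := by
  have hδ0 : 0 ≤ tvDist ρ σ := by
    unfold tvDist; positivity
  rcases eq_or_lt_of_le hδ0 with h | hδpos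
  · -- δ = 0 : the two distributions coincide
    have habs : ∑ x, |ρ x - σ x| = 0 := by
      have := h.symm
      unfold tvDist at this
      linarith
    have hz : ∀ x, ρ x = σ x := by
      intro x
      have := (Finset.sum_eq_zero_iff_of_nonneg
        (fun i (_ : i ∈ Finset.univ) => abs_nonneg (ρ i - σ i))).mp habs x (Finset.mem_univ x)
      have := abs_eq_zero.mp this
      linarith
    have hfun : ρ = σ := funext hz
    rw [hfun, sub_self, abs_zero]
    have h' : tvDist σ σ = 0 := by unfold tvDist; simp
    rw [h']
    norm_num [_root_.binEntropy]
  · -- δ > 0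
    set δ := tvDist ρ σ with hδdef
    set Δ₁ : A × B → ℝ := fun x => max (ρ x - σ x) 0 / δ with hΔ₁def
    set Δ₂ : A × B → ℝ := fun x => max (σ x - ρ x) 0 / δ with hΔ₂def
    have habs2 : ∑ x, |ρ x - σ x| = 2 * δ := by
      rw [hδdef]; unfold tvDist; ring
    have hsub : ∑ x, max (ρ x - σ x) 0 - ∑ x, max (σ x - ρ x) 0 = 0 := by
      rw [← Finset.sum_sub_distrib]
      have : ∀ x : A × B, max (ρ x - σ x) 0 - max (σ x - ρ x) 0 = ρ x - σ x := by
        intro x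
        have := max_zero_sub_max_neg_zero_eq_self (ρ x - σ x)
        rwa [neg_sub] at this
      rw [Finset.sum_congr rfl fun x _ => this x, Finset.sum_sub_distrib, hρsum, hσsum, sub_self]
    have hadd : ∑ x, max (ρ x - σ x) 0 + ∑ x, max (σ x - ρ x) 0 = 2 * δ := by
      rw [← Finset.sum_add_distrib]
      have : ∀ x : A × B, max (ρ x - σ x) 0 + max (σ x - ρ x) 0 = |ρ x - σ x| := by
        intro x
        have := max_zero_add_max_neg_zero_eq_abs_self (ρ x - σ x)
        rwa [neg_sub] at this
      rw [Finset.sum_congr rfl fun x _ => this x, habs2]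
    have hS₁ : ∑ x, max (ρ x - σ x) 0 = δ := by linarith
    have hS₂ : ∑ x, max (σ x - ρ x) 0 = δ := by linarith
    have hΔ₁n : ∀ x, 0 ≤ Δ₁ x := fun x => by
      rw [hΔ₁def]; positivity
    have hΔ₂n : ∀ x, 0 ≤ Δ₂ x := fun x => by
      rw [hΔ₂def]; positivity
    have hΔ₁s : ∑ x, Δ₁ x = 1 := by
      rw [hΔ₁def]
      simp only
      rw [← Finset.sum_div, hS₁, div_self (ne_of_gt hδpos)]
    have hΔ₂s : ∑ x, Δ₂ x = 1 := by
      rw [hΔ₂def]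
      simp only
      rw [← Finset.sum_div, hS₂, div_self (ne_of_gt hδpos)]
    have h1δ : (0:ℝ) < 1 + δ := by linarith
    have hmix : ∀ x, (1 - δ / (1 + δ)) * ρ x + (δ / (1 + δ)) * Δ₂ x =
        (1 - δ / (1 + δ)) * σ x + (δ / (1 + δ)) * Δ₁ x := by
      intro x
      have key : ρ x + max (σ x - ρ x) 0 = σ x + max (ρ x - σ x) 0 := by
        rcases le_total (ρ x) (σ x) with h' | h'
        · rw [max_eq_left (by linarith), max_eq_right (by linarith)]; ring
        · rw [max_eq_right (by linarith), max_eq_left (by linarith)]; ring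
      rw [hΔ₁def, hΔ₂def]
      simp only
      field_simp
      linear_combination key
    have dir1 := afw_main hA ρ σ Δ₁ Δ₂ δ hδpos hρ hσ hσsum hΔ₁n hΔ₁s hΔ₂n hmix
    have hmix' : ∀ x, (1 - δ / (1 + δ)) * σ x + (δ / (1 + δ)) * Δ₁ x =
        (1 - δ / (1 + δ)) * ρ x + (δ / (1 + δ)) * Δ₂ x := fun x => (hmix x).symm
    have dir2 := afw_main hA σ ρ Δ₂ Δ₁ δ hδpos hσ hρ hρsum hΔ₂n hΔ₂s hΔ₁n hmix'
    rw [abs_sub_le_iff]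
    exact ⟨dir1, dir2⟩
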